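/- Every set of 5 points in the plane ℝ² in general position contains a 4-hole; hence h(4) = 5. -/

import Mathlib

/-- Orientation determinant of three points in the plane:
`det [[1,1,1],[pₓ,qₓ,rₓ],[p_y,q_y,r_y]]`.
The triple `(p,q,r)` is positively oriented iff `det3 p q r > 0`,
and negatively oriented iff `det3 p q r < 0`. -/
noncomputable def det3 (p q r : ℝ × ℝ) : ℝ :=
  Matrix.det !![(1:ℝ), 1, 1; p.1, q.1, r.1; p.2, q.2, r.2]

/-- A set of points in the plane is in general position if no three
distinct points of it are collinear. -/
def InGenPos (S : Set (ℝ × ℝ)) : Prop :=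
  ∀ p ∈ S, ∀ q ∈ S, ∀ r ∈ S, p ≠ q → p ≠ r → q ≠ r →
    ¬ Collinear ℝ ({p, q, r} : Set (ℝ × ℝ))

/-- `P` is a `k`-gon of `S`: a `k`-element subset of `S` in convex position,
i.e. every point of `P` is an extreme point of the convex hull of `P`. -/
def IsGon (k : ℕ) (S P : Set (ℝ × ℝ)) : Prop :=
  P ⊆ S ∧ P.Finite ∧ P.ncard = k ∧
    ∀ p ∈ P, p ∈ Set.extremePoints ℝ (convexHull ℝ P)

/-- `P` is a `k`-hole of `S`: a `k`-gon of `S` whose convex hull contains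
no point of `S` other than the `k` points of `P`. -/
def IsHole (k : ℕ) (S P : Set (ℝ × ℝ)) : Prop :=
  IsGon k S P ∧ ∀ q ∈ S, q ∈ convexHull ℝ P → q ∈ P

lemma det3_eq (p q r : ℝ × ℝ) :
    det3 p q r = (q.1-p.1)*(r.2-p.2) - (q.2-p.2)*(r.1-p.1) := by
  simp [det3, Matrix.det_fin_three]; ring

lemma collinear_of_det3_zero {p q r : ℝ × ℝ} (h : det3 p q r = 0) :
    Collinear ℝ ({p, q, r} : Set (ℝ × ℝ)) := by
  rw [det3_eq] at h
  by_cases hpq : p = q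
  · subst hpq
    have : ({p, p, r} : Set (ℝ × ℝ)) = {p, r} := by simp
    rw [this]; exact collinear_pair ℝ p r
  rw [collinear_iff_exists_forall_eq_smul_vadd]
  refine ⟨p, q - p, ?_⟩
  intro x hx
  simp only [Set.mem_insert_iff, Set.mem_singleton_iff] at hx
  rcases hx with rfl | rfl | rfl
  · exact ⟨0, by simp⟩
  · exact ⟨1, by simp⟩
  · simp only [vadd_eq_add, Prod.ext_iff, Prod.fst_add, Prod.snd_add, Prod.smul_fst,
      Prod.smul_snd, Prod.fst_sub, Prod.snd_sub, smul_eq_mul]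
    by_cases h1 : q.1 = p.1
    · have h2 : q.2 - p.2 ≠ 0 := by
        intro hc
        exact hpq (Prod.ext (by linarith) (by linarith))
      refine ⟨(x.2 - p.2)/(q.2 - p.2), ?_, ?_⟩
      · have h3 : (q.2 - p.2) * (x.1 - p.1) = 0 := by
          have := h; rw [h1] at this; linarith
        rcases mul_eq_zero.1 h3 with h4 | h4
        · exact absurd h4 h2
        · rw [h1]; ring_nf; linarith
      · field_simp; ring
    · have hq1 : q.1 - p.1 ≠ 0 := fun hc => h1 (by linarith)
      refine ⟨(x.1 - p.1)/(q.1 - p.1), ?_, ?_⟩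
      · field_simp; ring
      · field_simp; nlinarith [h]

lemma mem_triple {u v w z : ℝ × ℝ} (h : z ∈ convexHull ℝ ({u, v, w} : Set (ℝ × ℝ))) :
    ∃ α β γ : ℝ, 0 ≤ α ∧ 0 ≤ β ∧ 0 ≤ γ ∧ α + β + γ = 1 ∧ z = α • u + β • v + γ • w := by
  rw [show ({u, v, w} : Set (ℝ × ℝ)) = insert u {v, w} from rfl,
    convexHull_insert ⟨v, by simp⟩, mem_convexJoin] at h
  obtain ⟨a, ha, b, hb, hz⟩ := h
  rw [Set.mem_singleton_iff] at ha; subst ha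
  rw [convexHull_pair] at hb
  obtain ⟨s, t, hs, ht, hst, hb⟩ := hb
  obtain ⟨p, q, hp, hq, hpq, hz⟩ := hz
  refine ⟨p, q*s, q*t, hp, by positivity, by positivity, by nlinarith, ?_⟩
  rw [← hz, ← hb]
  rw [smul_add, smul_smul, smul_smul]
  abel

lemma det3_comb {α β γ : ℝ} (h : α + β + γ = 1) (p q u v w : ℝ × ℝ) :
    det3 p q (α • u + β • v + γ • w)
      = α * det3 p q u + β * det3 p q v + γ * det3 p q w := by
  have hγ : γ = 1 - α - β := by linarith
  subst hγ
  simp only [det3_eq, Prod.fst_add, Prod.snd_add, Prod.smul_fst, Prod.smul_snd, smul_eq_mul]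
  ring

lemma det3_self12 (p q : ℝ × ℝ) : det3 p q p = 0 := by rw [det3_eq]; ring
lemma det3_self2 (p q : ℝ × ℝ) : det3 p q q = 0 := by rw [det3_eq]; ring
lemma det3_swap12 (p q r : ℝ × ℝ) : det3 q p r = - det3 p q r := by
  rw [det3_eq, det3_eq]; ring
lemma det3_cyc (p q r : ℝ × ℝ) : det3 q r p = det3 p q r := by
  rw [det3_eq, det3_eq]; ring
lemma det3_swap23 (p q r : ℝ × ℝ) : det3 p r q = - det3 p q r := by
  rw [det3_eq, det3_eq]; ring

/-- If `e` is in the hull of a triangle `x y z` and not on the line `x y`,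
then `z` and `e` are strictly on the same side of line `x y`. -/
lemma same_side_of_mem {x y z e : ℝ × ℝ}
    (hm : e ∈ convexHull ℝ ({x, y, z} : Set (ℝ × ℝ))) (hne : det3 x y e ≠ 0) :
    0 < det3 x y e * det3 x y z := by
  obtain ⟨α, β, γ, hα, hβ, hγ, hsum, heq⟩ := mem_triple hm
  have h0 : det3 x y e = γ * det3 x y z := by
    rw [heq, det3_comb hsum, det3_self12, det3_self2]; ring
  have hz : det3 x y z ≠ 0 := by
    intro hc; rw [h0, hc, mul_zero] at hne; exact hne rfl
  have hγpos : 0 < γ := by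
    rcases hγ.lt_or_eq with h | h
    · exact h
    · exfalso; rw [h0, ← h, zero_mul] at hne; exact hne rfl
  rw [h0, mul_assoc]
  exact mul_pos hγpos (mul_self_pos.2 hz)

/-- If `x` and `y` are strictly on the same side of line `d e`, then
`d` is not in the hull of `{x, y, e}`. -/
lemma not_mem_of_same_side {d e x y : ℝ × ℝ} (hde : d ≠ e)
    (h : 0 < det3 d e x * det3 d e y) :
    d ∉ convexHull ℝ ({x, y, e} : Set (ℝ × ℝ)) := by
  intro hmem
  obtain ⟨α, β, γ, hα, hβ, hγ, hsum, heq⟩ := mem_triple hmem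
  have hc : 0 = α * det3 d e x + β * det3 d e y := by
    have h1 := det3_comb hsum d e x y e
    rw [← heq, det3_self12, det3_self2] at h1
    linarith
  have hx0 : det3 d e x ≠ 0 := by
    intro hz; rw [hz, zero_mul] at h; exact lt_irrefl 0 h
  have hy0 : det3 d e y ≠ 0 := by
    intro hz; rw [hz, mul_zero] at h; exact lt_irrefl 0 h
  have hα0 : α = 0 ∧ β = 0 := by
    rcases lt_trichotomy (det3 d e x) 0 with hx | hx | hx
    · have hy : det3 d e y < 0 := by nlinarith
      have h1 : α * det3 d e x = 0 :=
        le_antisymm (by nlinarith) (by nlinarith)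
      have h2 : β * det3 d e y = 0 :=
        le_antisymm (by nlinarith) (by nlinarith)
      constructor
      · rcases mul_eq_zero.1 h1 with h' | h'
        · exact h'
        · exact absurd h' hx0
      · rcases mul_eq_zero.1 h2 with h' | h'
        · exact h'
        · exact absurd h' hy0
    · exact absurd hx hx0
    · have hy : 0 < det3 d e y := by nlinarith
      have h1 : α * det3 d e x = 0 :=
        le_antisymm (by nlinarith) (by nlinarith)
      have h2 : β * det3 d e y = 0 :=
        le_antisymm (by nlinarith) (by nlinarith)
      constructor
      · rcases mul_eq_zero.1 h1 with h' | h'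
        · exact h'
        · exact absurd h' hx0
      · rcases mul_eq_zero.1 h2 with h' | h'
        · exact h'
        · exact absurd h' hy0
  obtain ⟨hA, hB⟩ := hα0
  have hγ1 : γ = 1 := by rw [hA, hB] at hsum; linarith
  rw [hA, hB, hγ1] at heq
  simp at heq
  exact hde heq

/-- An extreme point of a larger set lying in a smaller subset is extreme there. -/
lemma extreme_mono {A B : Set (ℝ × ℝ)} {x : ℝ × ℝ}
    (hx : x ∈ Set.extremePoints ℝ A) (hBA : B ⊆ A) (hxB : x ∈ B) :
    x ∈ Set.extremePoints ℝ B := by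
  rw [mem_extremePoints] at hx ⊢
  exact ⟨hxB, fun y hy z hz hs => hx.2 y (hBA hy) z (hBA hz) hs⟩

/-- A point of `P` not in the hull of the rest is an extreme point of the hull of `P`. -/
lemma vertex_of_not_mem_hull {P : Set (ℝ × ℝ)} {x : ℝ × ℝ}
    (hxP : x ∈ P) (h : x ∉ convexHull ℝ (P \ {x})) :
    x ∈ Set.extremePoints ℝ (convexHull ℝ P) := by
  refine mem_extremePoints.2 ⟨subset_convexHull ℝ P hxP, ?_⟩
  rcases Set.eq_empty_or_nonempty (P \ {x}) with hPe | hPn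
  · have hP : P = {x} :=
      Set.Subset.antisymm (Set.diff_eq_empty.1 (by rw [hPe])) (by simpa using hxP)
    intro y hy z hz _
    rw [hP, convexHull_singleton] at hy hz
    exact ⟨hy, hz⟩
  · have hPins : P = insert x (P \ {x}) := by
      rw [Set.insert_diff_singleton, Set.insert_eq_self.2 hxP]
    have hrep : ∀ y ∈ convexHull ℝ P, ∃ (a : ℝ) (w : ℝ × ℝ), 0 ≤ a ∧ a ≤ 1 ∧
        w ∈ convexHull ℝ (P \ {x}) ∧ y = a • x + (1 - a) • w := by
      intro y hy
      rw [hPins, convexHull_insert hPn, mem_convexJoin] at hy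
      obtain ⟨u, hu, w, hw, hyseg⟩ := hy
      rw [Set.mem_singleton_iff] at hu; subst hu
      obtain ⟨a, b, ha, hb, hab, heq⟩ := hyseg
      refine ⟨a, w, ha, by linarith, hw, ?_⟩
      have hb' : (1:ℝ) - a = b := by linarith
      rw [hb']; exact heq.symm
    intro y hy z hz hseg
    obtain ⟨a, w1, ha0, ha1, hw1, hy'⟩ := hrep y hy
    obtain ⟨b, w2, hb0, hb1, hw2, hz'⟩ := hrep z hz
    obtain ⟨l, m, hl, hm, hlm, hx'⟩ := hseg
    set μ := l * (1 - a) + m * (1 - b) with hμ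
    have hμ0 : 0 ≤ μ := by nlinarith
    rcases eq_or_lt_of_le hμ0 with hμz | hμpos
    · have ha' : a = 1 := by nlinarith
      have hb' : b = 1 := by nlinarith
      constructor
      · rw [hy', ha']; norm_num
      · rw [hz', hb']; norm_num
    · exfalso
      set w : ℝ × ℝ := ((l * (1 - a)) / μ) • w1 + ((m * (1 - b)) / μ) • w2 with hwdef
      have hwmem : w ∈ convexHull ℝ (P \ {x}) := by
        apply convex_convexHull ℝ (P \ {x}) hw1 hw2
        · apply div_nonneg _ hμ0; nlinarith
        · apply div_nonneg _ hμ0; nlinarith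
        · field_simp; exact hμ.symm
      have hμw : μ • w = (l * (1 - a)) • w1 + (m * (1 - b)) • w2 := by
        rw [hwdef, smul_add, smul_smul, smul_smul,
          mul_div_cancel₀ _ (ne_of_gt hμpos), mul_div_cancel₀ _ (ne_of_gt hμpos)]
      have hx'' : (l * a + m * b) • x + ((l * (1 - a)) • w1 + (m * (1 - b)) • w2) = x := by
        rw [hy', hz'] at hx'
        linear_combination (norm := module) hx'
      have key : μ • x = μ • w := by
        rw [hμw]
        have hsc : l * a + m * b = 1 - μ := by rw [hμ]; nlinarith
        rw [hsc] at hx''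
        linear_combination (norm := module) hx''.symm
      have hxw : x = w := by
        have := smul_right_injective (ℝ × ℝ) (ne_of_gt hμpos) key
        exact this
      exact h (hxw ▸ hwmem)

/-- Builder: a 4-element subset, each of whose points is either extreme in `S`
or outside the hull of the rest, such that all points of `S` outside it are
extreme in `S`, is a 4-hole. -/
lemma builder {S P : Set (ℝ × ℝ)} (hfin : S.Finite) (hPS : P ⊆ S) (h4 : P.ncard = 4)
    (hext : ∀ p ∈ P, p ∈ Set.extremePoints ℝ (convexHull ℝ S) ∨ p ∉ convexHull ℝ (P \ {p}))
    (hout : ∀ q ∈ S, q ∉ P → q ∈ Set.extremePoints ℝ (convexHull ℝ S)) :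
    IsHole 4 S P := by
  have hPfin := hfin.subset hPS
  have hPP : ∀ p ∈ P, p ∈ Set.extremePoints ℝ (convexHull ℝ P) := by
    intro p hp
    rcases hext p hp with h | h
    · exact extreme_mono h (convexHull_mono hPS) (subset_convexHull ℝ P hp)
    · exact vertex_of_not_mem_hull hp h
  refine ⟨⟨hPS, hPfin, h4, hPP⟩, ?_⟩
  intro q hq hqc
  by_contra hqP
  have h1 := extreme_mono (hout q hq hqP) (convexHull_mono hPS) hqc
  exact hqP (extremePoints_convexHull_subset h1)

lemma no_three_triangles {a b c d e : ℝ × ℝ}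
    (h1 : det3 a b e ≠ 0) (h2 : det3 b c e ≠ 0) (h3 : det3 b d e ≠ 0)
    (m1 : e ∈ convexHull ℝ ({a, b, c} : Set (ℝ × ℝ)))
    (m2 : e ∈ convexHull ℝ ({a, b, d} : Set (ℝ × ℝ)))
    (m3 : e ∈ convexHull ℝ ({b, c, d} : Set (ℝ × ℝ))) : False := by
  have r1 : ({a, b, c} : Set (ℝ × ℝ)) = {b, c, a} := by
    ext q; simp only [Set.mem_insert_iff, Set.mem_singleton_iff]; tauto
  have r2 : ({a, b, d} : Set (ℝ × ℝ)) = {b, d, a} := by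
    ext q; simp only [Set.mem_insert_iff, Set.mem_singleton_iff]; tauto
  have r3 : ({b, c, d} : Set (ℝ × ℝ)) = {b, d, c} := by
    ext q; simp only [Set.mem_insert_iff, Set.mem_singleton_iff]; tauto
  have p1 := same_side_of_mem m1 h1
  have p2 := same_side_of_mem m2 h1
  have p3 := same_side_of_mem (r1 ▸ m1) h2
  have p4 := same_side_of_mem m3 h2
  have p5 := same_side_of_mem (r2 ▸ m2) h3
  have p6 := same_side_of_mem (r3 ▸ m3) h3
  rw [show det3 b c a = det3 a b c from det3_cyc a b c] at p3
  rw [show det3 b d a = det3 a b d from det3_cyc a b d] at p5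
  rw [show det3 b d c = -det3 b c d from det3_swap23 b c d] at p6
  have q1 : 0 < det3 a b c * det3 a b d := by
    nlinarith [mul_pos p1 p2, sq_nonneg (det3 a b e)]
  have q2 : 0 < det3 a b c * det3 b c d := by
    nlinarith [mul_pos p3 p4, sq_nonneg (det3 b c e)]
  have q3 : 0 < det3 a b d * -det3 b c d := by
    nlinarith [mul_pos p5 p6, sq_nonneg (det3 b d e)]
  nlinarith [mul_pos q1 q2, sq_nonneg (det3 a b c)]

lemma exists_pos_pair {x y z : ℝ} (hx : x ≠ 0) (hy : y ≠ 0) (hz : z ≠ 0) :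
    0 < x * y ∨ 0 < x * z ∨ 0 < y * z := by
  rcases lt_or_gt_of_ne hx with h | h <;> rcases lt_or_gt_of_ne hy with h' | h' <;>
    rcases lt_or_gt_of_ne hz with h'' | h''
  all_goals first
    | (left; nlinarith)
    | (right; left; nlinarith)
    | (right; right; nlinarith)

lemma collinear_of_subset_hull {E S : Set (ℝ × ℝ)} (hE : Collinear ℝ E)
    (hS : S ⊆ convexHull ℝ E) : Collinear ℝ S := by
  obtain ⟨p₀, v, hline⟩ := (collinear_iff_exists_forall_eq_smul_vadd (k := ℝ) E).1 hE
  set L : Set (ℝ × ℝ) := {x | ∃ t : ℝ, x = t • v +ᵥ p₀} with hL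
  have hconvL : Convex ℝ L := by
    rintro x ⟨t, rfl⟩ y ⟨u, rfl⟩ a b ha hb hab
    refine ⟨a * t + b * u, ?_⟩
    simp only [vadd_eq_add]
    match_scalars <;> linarith
  have hEL : E ⊆ L := fun p hp => hline p hp
  have hSL : S ⊆ L := fun s hs => convexHull_min hEL hconvL (hS hs)
  exact (collinear_iff_exists_forall_eq_smul_vadd (k := ℝ) S).2 ⟨p₀, v, fun p hp => hSL hp⟩

lemma ncard4 {w x y z : ℝ × ℝ} (h1 : w ≠ x) (h2 : w ≠ y) (h3 : w ≠ z)
    (h4 : x ≠ y) (h5 : x ≠ z) (h6 : y ≠ z) :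
    ({w, x, y, z} : Set (ℝ × ℝ)).ncard = 4 := by
  rw [Set.ncard_insert_of_notMem (by simp [h1, h2, h3]) (Set.toFinite _),
    Set.ncard_insert_of_notMem (by simp [h4, h5]) (Set.toFinite _),
    Set.ncard_insert_of_notMem (by simp [h6]) (Set.toFinite _), Set.ncard_singleton]

lemma hole_of_three_ext {S : Set (ℝ × ℝ)} (hfin : S.Finite) {p1 p2 p3 w : ℝ × ℝ}
    (h1 : p1 ∈ S) (h2 : p2 ∈ S) (h3 : p3 ∈ S) (hw : w ∈ S)
    (d12 : p1 ≠ p2) (d13 : p1 ≠ p3) (d23 : p2 ≠ p3)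
    (dw1 : w ≠ p1) (dw2 : w ≠ p2) (dw3 : w ≠ p3)
    (e1 : p1 ∈ Set.extremePoints ℝ (convexHull ℝ S))
    (e2 : p2 ∈ Set.extremePoints ℝ (convexHull ℝ S))
    (e3 : p3 ∈ Set.extremePoints ℝ (convexHull ℝ S))
    (hwout : w ∉ convexHull ℝ ({p1, p2, p3} : Set (ℝ × ℝ)))
    (hout : ∀ q ∈ S, q ∉ ({p1, p2, p3, w} : Set (ℝ × ℝ)) →
      q ∈ Set.extremePoints ℝ (convexHull ℝ S)) :
    IsHole 4 S ({p1, p2, p3, w} : Set (ℝ × ℝ)) := by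
  apply builder hfin ?_ (ncard4 d12 d13 dw1.symm d23 dw2.symm dw3.symm) ?_ hout
  · rintro q hq
    simp only [Set.mem_insert_iff, Set.mem_singleton_iff] at hq
    rcases hq with rfl | rfl | rfl | rfl <;> assumption
  · intro p hp
    simp only [Set.mem_insert_iff, Set.mem_singleton_iff] at hp
    rcases hp with rfl | rfl | rfl | rfl
    · exact Or.inl e1
    · exact Or.inl e2
    · exact Or.inl e3
    · refine Or.inr fun hc => hwout (convexHull_mono ?_ hc)
      rintro q ⟨hq, hq'⟩
      simp only [Set.mem_insert_iff, Set.mem_singleton_iff] at *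
      tauto

lemma hole_of_two_ext {S : Set (ℝ × ℝ)} (hfin : S.Finite) {x y d e : ℝ × ℝ}
    (hx : x ∈ S) (hy : y ∈ S) (hd : d ∈ S) (he : e ∈ S)
    (dxy : x ≠ y) (dxd : x ≠ d) (dxe : x ≠ e) (dyd : y ≠ d) (dye : y ≠ e) (hde : d ≠ e)
    (ex : x ∈ Set.extremePoints ℝ (convexHull ℝ S))
    (ey : y ∈ Set.extremePoints ℝ (convexHull ℝ S))
    (hside : 0 < det3 d e x * det3 d e y)
    (hout : ∀ q ∈ S, q ∉ ({x, y, d, e} : Set (ℝ × ℝ)) →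
      q ∈ Set.extremePoints ℝ (convexHull ℝ S)) :
    IsHole 4 S ({x, y, d, e} : Set (ℝ × ℝ)) := by
  have hside' : 0 < det3 e d x * det3 e d y := by
    rw [det3_swap12 d e x, det3_swap12 d e y]; nlinarith
  apply builder hfin ?_ (ncard4 dxy dxd dxe dyd dye hde) ?_ hout
  · rintro q hq
    simp only [Set.mem_insert_iff, Set.mem_singleton_iff] at hq
    rcases hq with rfl | rfl | rfl | rfl <;> assumption
  · intro p hp
    simp only [Set.mem_insert_iff, Set.mem_singleton_iff] at hp
    rcases hp with rfl | rfl | rfl | rfl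
    · exact Or.inl ex
    · exact Or.inl ey
    · refine Or.inr fun hc => not_mem_of_same_side hde hside (convexHull_mono ?_ hc)
      rintro q ⟨hq, hq'⟩
      simp only [Set.mem_insert_iff, Set.mem_singleton_iff] at *
      tauto
    · refine Or.inr fun hc => not_mem_of_same_side hde.symm hside' (convexHull_mono ?_ hc)
      rintro q ⟨hq, hq'⟩
      simp only [Set.mem_insert_iff, Set.mem_singleton_iff] at *
      tauto

/-- Every set of 5 points in the plane in general position contains a 4-hole. -/
theorem every_5_point_set_has_4hole (S : Set (ℝ × ℝ))
    (hfin : S.Finite) (hcard : S.ncard = 5) (hgp : InGenPos S) :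
    ∃ P : Set (ℝ × ℝ), IsHole 4 S P := by
  classical
  have hdet : ∀ p ∈ S, ∀ q ∈ S, ∀ r ∈ S, p ≠ q → p ≠ r → q ≠ r → det3 p q r ≠ 0 := by
    intro p hp q hq r hr h1 h2 h3 h0
    exact hgp p hp q hq r hr h1 h2 h3 (collinear_of_det3_zero h0)
  set E := Set.extremePoints ℝ (convexHull ℝ S) with hEdef
  have hES : E ⊆ S := extremePoints_convexHull_subset
  have hEfin : E.Finite := hfin.subset hES
  have hconv : convexHull ℝ E = convexHull ℝ S := by
    have hKM := closure_convexHull_extremePoints (hfin.isCompact_convexHull (𝕜 := ℝ))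
      (convex_convexHull ℝ S)
    rwa [IsClosed.closure_eq (hEfin.isCompact_convexHull (𝕜 := ℝ)).isClosed] at hKM
  have hE3 : 3 ≤ E.ncard := by
    by_contra hlt
    push_neg at hlt
    have hcol : Collinear ℝ E := by
      have h2 : E.ncard = 0 ∨ E.ncard = 1 ∨ E.ncard = 2 := by omega
      rcases h2 with h | h | h
      · rw [(Set.ncard_eq_zero hEfin).1 h]; exact collinear_empty ℝ _
      · obtain ⟨a, ha⟩ := Set.ncard_eq_one.1 h; rw [ha]; exact collinear_singleton ℝ a
      · obtain ⟨a, b, _, hab⟩ := Set.ncard_eq_two.1 h; rw [hab]; exact collinear_pair ℝ a b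
    have hScol : Collinear ℝ S :=
      collinear_of_subset_hull hcol (by rw [hconv]; exact subset_convexHull ℝ S)
    obtain ⟨a, T, haT, hTS, hT4⟩ :=
      Set.eq_insert_of_ncard_eq_succ (show S.ncard = 4 + 1 from hcard)
    obtain ⟨b, U, hbU, hUT, hU3⟩ :=
      Set.eq_insert_of_ncard_eq_succ (show T.ncard = 3 + 1 from hT4)
    obtain ⟨c, hcU⟩ := Set.nonempty_of_ncard_ne_zero (s := U) (by omega)
    have hbT : b ∈ T := by rw [← hUT]; exact Set.mem_insert _ _
    have hcT : c ∈ T := by rw [← hUT]; exact Set.mem_insert_of_mem _ hcU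
    have haS : a ∈ S := by rw [← hTS]; exact Set.mem_insert _ _
    have hbS : b ∈ S := by rw [← hTS]; exact Set.mem_insert_of_mem _ hbT
    have hcS : c ∈ S := by rw [← hTS]; exact Set.mem_insert_of_mem _ hcT
    have hab : a ≠ b := fun h => haT (h ▸ hbT)
    have hac : a ≠ c := fun h => haT (h ▸ hcT)
    have hbc : b ≠ c := fun h => hbU (h ▸ hcU)
    exact hgp a haS b hbS c hcS hab hac hbc
      (hScol.subset (by intro q hq; rcases hq with rfl | rfl | rfl <;> assumption))
  have hE5 : E.ncard ≤ 5 := hcard ▸ Set.ncard_le_ncard hES hfin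
  have hcases : E.ncard = 3 ∨ E.ncard = 4 ∨ E.ncard = 5 := by omega
  rcases hcases with h3c | h4c | h5c
  · -- |E| = 3 : triangle with two interior points
    obtain ⟨a, b, c, hab, hac, hbc, hEeq⟩ := Set.ncard_eq_three.1 h3c
    have hSd : (S \ E).ncard = 2 := by
      rw [Set.ncard_diff hES hEfin, hcard, h3c]
    obtain ⟨d, e, hde, hdiff⟩ := Set.ncard_eq_two.1 hSd
    have hdSE : d ∈ S \ E := by rw [hdiff]; exact Set.mem_insert _ _
    have heSE : e ∈ S \ E := by rw [hdiff]; simp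
    have hdS : d ∈ S := hdSE.1
    have heS : e ∈ S := heSE.1
    have haE : a ∈ E := by rw [hEeq]; simp
    have hbE : b ∈ E := by rw [hEeq]; simp
    have hcE : c ∈ E := by rw [hEeq]; simp
    have haS : a ∈ S := hES haE
    have hbS : b ∈ S := hES hbE
    have hcS : c ∈ S := hES hcE
    have hda : d ≠ a := fun h => hdSE.2 (h ▸ haE)
    have hdb : d ≠ b := fun h => hdSE.2 (h ▸ hbE)
    have hdc : d ≠ c := fun h => hdSE.2 (h ▸ hcE)
    have hea : e ≠ a := fun h => heSE.2 (h ▸ haE)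
    have heb : e ≠ b := fun h => heSE.2 (h ▸ hbE)
    have hec : e ≠ c := fun h => heSE.2 (h ▸ hcE)
    have hfa : det3 d e a ≠ 0 := hdet d hdS e heS a haS hde hda hea
    have hfb : det3 d e b ≠ 0 := hdet d hdS e heS b hbS hde hdb heb
    have hfc : det3 d e c ≠ 0 := hdet d hdS e heS c hcS hde hdc hec
    have hout : ∀ (x y z : ℝ × ℝ), E = {x, y, z} →
        ∀ q ∈ S, q ∉ ({x, y, d, e} : Set (ℝ × ℝ)) →
        q ∈ Set.extremePoints ℝ (convexHull ℝ S) := by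
      intro x y z hExyz q hq hqP
      by_cases hqE : q ∈ E
      · exact hqE
      · exfalso
        have : q ∈ S \ E := ⟨hq, hqE⟩
        rw [hdiff] at this
        rcases this with rfl | rfl
        · exact hqP (by simp)
        · exact hqP (by simp)
    rcases exists_pos_pair hfa hfb hfc with hp | hp | hp
    · exact ⟨{a, b, d, e}, hole_of_two_ext hfin haS hbS hdS heS hab hda.symm hea.symm
        hdb.symm heb.symm hde haE hbE hp (hout a b c hEeq)⟩
    · exact ⟨{a, c, d, e}, hole_of_two_ext hfin haS hcS hdS heS hac hda.symm hea.symm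
        hdc.symm hec.symm hde haE hcE hp (hout a c b (by rw [hEeq]; ext q; simp; tauto))⟩
    · exact ⟨{b, c, d, e}, hole_of_two_ext hfin hbS hcS hdS heS hbc hdb.symm heb.symm
        hdc.symm hec.symm hde hbE hcE hp (hout b c a (by rw [hEeq]; ext q; simp; tauto))⟩
  · -- |E| = 4 : quadrilateral with one interior point
    obtain ⟨a, E', haE', hEins, hE'3⟩ :=
      Set.eq_insert_of_ncard_eq_succ (show E.ncard = 3 + 1 from h4c)
    obtain ⟨b, c, d, hbc, hbd, hcd, hE'eq⟩ := Set.ncard_eq_three.1 hE'3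
    subst hE'eq
    have haE : a ∈ E := by rw [← hEins]; exact Set.mem_insert _ _
    have hbE : b ∈ E := by rw [← hEins]; simp
    have hcE : c ∈ E := by rw [← hEins]; simp
    have hdE : d ∈ E := by rw [← hEins]; simp
    have hab : a ≠ b := fun h => haE' (by rw [h]; simp)
    have hac : a ≠ c := fun h => haE' (by rw [h]; simp)
    have had : a ≠ d := fun h => haE' (by rw [h]; simp)
    have haS : a ∈ S := hES haE
    have hbS : b ∈ S := hES hbE
    have hcS : c ∈ S := hES hcE
    have hdS : d ∈ S := hES hdE
    have hSd : (S \ E).ncard = 1 := by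
      rw [Set.ncard_diff hES hEfin, hcard, h4c]
    obtain ⟨e, heq⟩ := Set.ncard_eq_one.1 hSd
    have heSE : e ∈ S \ E := by rw [heq]; simp
    have heS : e ∈ S := heSE.1
    have hea : e ≠ a := fun h => heSE.2 (h ▸ haE)
    have heb : e ≠ b := fun h => heSE.2 (h ▸ hbE)
    have hec : e ≠ c := fun h => heSE.2 (h ▸ hcE)
    have hed : e ≠ d := fun h => heSE.2 (h ▸ hdE)
    have hout : ∀ q ∈ S, q ∈ E ∨ q = e := by
      intro q hq
      by_cases hqE : q ∈ E
      · exact Or.inl hqE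
      · right
        have : q ∈ S \ E := ⟨hq, hqE⟩
        rw [heq] at this
        exact this
    have h1 : det3 a b e ≠ 0 := hdet a haS b hbS e heS hab hea.symm heb.symm
    have h2 : det3 b c e ≠ 0 := hdet b hbS c hcS e heS hbc heb.symm hec.symm
    have h3 : det3 b d e ≠ 0 := hdet b hbS d hdS e heS hbd heb.symm hed.symm
    have houtP : ∀ (z : ℝ × ℝ), z ∈ E → ∀ (P : Set (ℝ × ℝ)),
        (∀ q ∈ E, q ≠ z → q ∈ P) → (e ∈ P) →
        ∀ q ∈ S, q ∉ P → q ∈ Set.extremePoints ℝ (convexHull ℝ S) := by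
      intro z hzE P hEP heP q hq hqP
      rcases hout q hq with hqE | rfl
      · by_cases hqz : q = z
        · exact hqz ▸ hzE
        · exact absurd (hEP q hqE hqz) hqP
      · exact absurd heP hqP
    by_cases hm1 : e ∈ convexHull ℝ ({a, b, c} : Set (ℝ × ℝ))
    · by_cases hm2 : e ∈ convexHull ℝ ({a, b, d} : Set (ℝ × ℝ))
      · have hm3 : e ∉ convexHull ℝ ({b, c, d} : Set (ℝ × ℝ)) :=
          fun hm3 => no_three_triangles h1 h2 h3 hm1 hm2 hm3
        refine ⟨{b, c, d, e}, hole_of_three_ext hfin hbS hcS hdS heS hbc hbd hcd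
          heb hec hed hbE hcE hdE hm3 ?_⟩
        refine houtP a haE _ ?_ (by simp)
        intro q hqE hqa
        rw [← hEins] at hqE
        rcases hqE with h | h
        · exact absurd h hqa
        · simp only [Set.mem_insert_iff, Set.mem_singleton_iff] at h ⊢; tauto
      · refine ⟨{a, b, d, e}, hole_of_three_ext hfin haS hbS hdS heS hab had hbd
          hea heb hed haE hbE hdE hm2 ?_⟩
        refine houtP c hcE _ ?_ (by simp)
        intro q hqE hqc
        rw [← hEins] at hqE
        rcases hqE with h | h
        · simp [h]
        · simp only [Set.mem_insert_iff, Set.mem_singleton_iff] at h ⊢; tauto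
    · refine ⟨{a, b, c, e}, hole_of_three_ext hfin haS hbS hcS heS hab hac hbc
        hea heb hec haE hbE hcE hm1 ?_⟩
      refine houtP d hdE _ ?_ (by simp)
      intro q hqE hqd
      rw [← hEins] at hqE
      rcases hqE with h | h
      · simp [h]
      · simp only [Set.mem_insert_iff, Set.mem_singleton_iff] at h ⊢; tauto
  · -- |E| = 5 : convex position
    have hE : E = S := Set.eq_of_subset_of_ncard_le hES (by omega) hfin
    obtain ⟨z, hz⟩ := Set.nonempty_of_ncard_ne_zero (s := S) (by omega)
    refine ⟨S \ {z}, builder hfin Set.diff_subset ?_ ?_ ?_⟩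
    · rw [Set.ncard_diff_singleton_of_mem hz, hcard]
    · intro p hp
      exact Or.inl (show p ∈ E by rw [hE]; exact hp.1)
    · intro q hq _
      exact (show q ∈ E by rw [hE]; exact hq)
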